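/- For all integers s, m ≥ 0 and 0 ≤ g ≤ s: p(2,s,m,1=,g=,0=,m=) = 1 (the unique such multigraph is a root with s−g self-loops joined by an edge of multiplicity m to a single child carrying g self-loops). Moreover, for every n ≥ 3 and all s ≥ 0: p(n,s,0,1=,0=,0=,0=) = 1 (the unique such multigraph is a root carrying all s self-loops joined by simple edges to n−1 loop-free leaf children). (Corrected form of the paper's Lemma 4(iv).) -/

import Mathlib

/-- Rooted tree-like multigraph (list-based representative): a root carrying a
self-loop count together with a list of children, each child being a pair of an
edge multiplicity (number of multiple edges, i.e. copies beyond the first, of the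
edge joining the root to the child's root) and a rooted tree-like multigraph. -/
inductive PreRTM : Type where
  | node : ℕ → List (ℕ × PreRTM) → PreRTM

namespace PreRTM

/-- self-loop count of the root -/
def loops : PreRTM → ℕ
  | .node l _ => l

/-- the children of the root -/
def children : PreRTM → List (ℕ × PreRTM)
  | .node _ cs => cs

/-- number of vertices -/
def vcount : PreRTM → ℕ
  | .node _ cs => 1 + (cs.attach.map (fun c => vcount c.1.2)).sum
decreasing_by
  rcases c with ⟨⟨e, Q⟩, hc⟩
  have h1 := List.sizeOf_lt_of_mem hc
  simp only [Prod.mk.sizeOf_spec, PreRTM.node.sizeOf_spec] at *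
  omega

/-- total number of self-loops -/
def scount : PreRTM → ℕ
  | .node l cs => l + (cs.attach.map (fun c => scount c.1.2)).sum
decreasing_by
  rcases c with ⟨⟨e, Q⟩, hc⟩
  have h1 := List.sizeOf_lt_of_mem hc
  simp only [Prod.mk.sizeOf_spec, PreRTM.node.sizeOf_spec] at *
  omega

/-- total number of multiple edges -/
def ecount : PreRTM → ℕ
  | .node _ cs => (cs.attach.map (fun c => c.1.1 + ecount c.1.2)).sum
decreasing_by
  rcases c with ⟨⟨e, Q⟩, hc⟩
  have h1 := List.sizeOf_lt_of_mem hc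
  simp only [Prod.mk.sizeOf_spec, PreRTM.node.sizeOf_spec] at *
  omega

/-- Max_v: maximum number of vertices in a descendant subtree of the root (0 if none) -/
def maxV (P : PreRTM) : ℕ :=
  (P.children.map (fun c => c.2.vcount)).foldr max 0

/-- Max_s: maximum number of self-loops among descendant subtrees with `vcount = maxV` -/
def maxS (P : PreRTM) : ℕ :=
  (((P.children.filter (fun c => c.2.vcount == P.maxV)).map (fun c => c.2.scount)).foldr max 0)

/-- Max_m: maximum number of multiple edges among descendant subtrees with `vcount = maxV` -/
def maxM (P : PreRTM) : ℕ :=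
  (((P.children.filter (fun c => c.2.vcount == P.maxV)).map (fun c => c.2.ecount)).foldr max 0)

/-- Max_l: maximum multiplicity of the root edge among descendant subtrees with
`vcount = maxV` and `ecount = maxM` -/
def maxL (P : PreRTM) : ℕ :=
  (((P.children.filter (fun c => c.2.vcount == P.maxV && c.2.ecount == P.maxM)).map
      (fun c => c.1)).foldr max 0)

mutual
  /-- root-preserving isomorphism: equal root self-loop counts and equal multisets of children -/
  inductive REquiv : PreRTM → PreRTM → Prop where
    | node (l : ℕ) {cs cs' : List (ℕ × PreRTM)} :
        LEquiv cs cs' → REquiv (.node l cs) (.node l cs')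
  /-- lists of children agree as multisets, up to `REquiv` of the subtrees -/
  inductive LEquiv : List (ℕ × PreRTM) → List (ℕ × PreRTM) → Prop where
    | nil : LEquiv [] []
    | cons {e : ℕ} {P Q : PreRTM} {l₁ l₂ : List (ℕ × PreRTM)} :
        REquiv P Q → LEquiv l₁ l₂ → LEquiv ((e, P) :: l₁) ((e, Q) :: l₂)
    | swap (a b : ℕ × PreRTM) (l : List (ℕ × PreRTM)) : LEquiv (a :: b :: l) (b :: a :: l)
    | trans {l₁ l₂ l₃ : List (ℕ × PreRTM)} : LEquiv l₁ l₂ → LEquiv l₂ l₃ → LEquiv l₁ l₃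
end

end PreRTM

/-- Rooted tree-like multigraphs, up to root-preserving isomorphism. -/
def RTM : Type := Quot PreRTM.REquiv

/-- the isomorphism class of a representative -/
def cls (P : PreRTM) : RTM := Quot.mk PreRTM.REquiv P

namespace PreRTM

/-- `P` has `n` vertices, `s` self-loops and `m` multiple edges -/
def memP (n s m : ℤ) (P : PreRTM) : Prop :=
  (P.vcount : ℤ) = n ∧ (P.scount : ℤ) = s ∧ (P.ecount : ℤ) = m

/-- membership in 𝒫(n,s,m,f≤,g≤,h≤,k≤) -/
def memLLLL (n s m f g h k : ℤ) (P : PreRTM) : Prop :=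
  memP n s m P ∧ (P.maxV : ℤ) ≤ f ∧ (P.maxS : ℤ) ≤ g ∧ (P.maxM : ℤ) ≤ h ∧ (P.maxL : ℤ) ≤ k

/-- membership in 𝒫(n,s,m,f=,g≤,h≤,k≤) -/
def memELLL (n s m f g h k : ℤ) (P : PreRTM) : Prop :=
  memLLLL n s m f g h k P ∧ (P.maxV : ℤ) = f

/-- membership in 𝒫(n,s,m,f=,g=,h≤,k≤) -/
def memEELL (n s m f g h k : ℤ) (P : PreRTM) : Prop :=
  memELLL n s m f g h k P ∧ (P.maxS : ℤ) = g

/-- membership in 𝒫(n,s,m,f=,g=,h=,k≤) -/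
def memEEEL (n s m f g h k : ℤ) (P : PreRTM) : Prop :=
  memEELL n s m f g h k P ∧ (P.maxM : ℤ) = h

/-- membership in 𝒫(n,s,m,f=,g=,h=,k=) -/
def memEEEE (n s m f g h k : ℤ) (P : PreRTM) : Prop :=
  memEEEL n s m f g h k P ∧ (P.maxL : ℤ) = k

end PreRTM

/-- the family 𝒫(n,s,m,f≤,g≤,h≤,k≤) of isomorphism classes -/
def famLLLL (n s m f g h k : ℤ) : Set RTM := cls '' {P | P.memLLLL n s m f g h k}
/-- the family 𝒫(n,s,m,f=,g≤,h≤,k≤) of isomorphism classes -/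
def famELLL (n s m f g h k : ℤ) : Set RTM := cls '' {P | P.memELLL n s m f g h k}
/-- the family 𝒫(n,s,m,f=,g=,h≤,k≤) of isomorphism classes -/
def famEELL (n s m f g h k : ℤ) : Set RTM := cls '' {P | P.memEELL n s m f g h k}
/-- the family 𝒫(n,s,m,f=,g=,h=,k≤) of isomorphism classes -/
def famEEEL (n s m f g h k : ℤ) : Set RTM := cls '' {P | P.memEEEL n s m f g h k}
/-- the family 𝒫(n,s,m,f=,g=,h=,k=) of isomorphism classes -/
def famEEEE (n s m f g h k : ℤ) : Set RTM := cls '' {P | P.memEEEE n s m f g h k}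

/-- p(n,s,m,f≤,g≤,h≤,k≤) -/
noncomputable def pLLLL (n s m f g h k : ℤ) : ℕ := (famLLLL n s m f g h k).ncard
/-- p(n,s,m,f=,g≤,h≤,k≤) -/
noncomputable def pELLL (n s m f g h k : ℤ) : ℕ := (famELLL n s m f g h k).ncard
/-- p(n,s,m,f=,g=,h≤,k≤) -/
noncomputable def pEELL (n s m f g h k : ℤ) : ℕ := (famEELL n s m f g h k).ncard
/-- p(n,s,m,f=,g=,h=,k≤) -/
noncomputable def pEEEL (n s m f g h k : ℤ) : ℕ := (famEEEL n s m f g h k).ncard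
/-- p(n,s,m,f=,g=,h=,k=) -/
noncomputable def pEEEE (n s m f g h k : ℤ) : ℕ := (famEEEE n s m f g h k).ncard

/-- w(f,g,h;z) = C(p(f,g,h,(f−1)≤,g≤,h≤,h≤) + z − 1, z) -/
noncomputable def w (f g h : ℤ) (z : ℕ) : ℕ :=
  (pLLLL f g h (f - 1) g h h + z - 1).choose z

/-- the index set Y : integers y with 1 ≤ y ≤ ⌊(n−1)/f⌋, additionally y ≤ ⌊s/g⌋ when g ≥ 1
and y ≤ ⌊m/(h+k)⌋ when h+k ≥ 1 -/
noncomputable def Yset (n s m f g h k : ℤ) : Finset ℤ :=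
  (Finset.Icc 1 ((n - 1) / f)).filter
    (fun y => (1 ≤ g → y ≤ s / g) ∧ (1 ≤ h + k → y ≤ m / (h + k)))

namespace PreRTM

lemma vcount_node (l : ℕ) (cs : List (ℕ × PreRTM)) :
    vcount (.node l cs) = 1 + (cs.map (fun c => vcount c.2)).sum := by
  rw [vcount]
  rw [List.attach_map_val (l := cs) (f := fun c => vcount c.2)]

lemma scount_node (l : ℕ) (cs : List (ℕ × PreRTM)) :
    scount (.node l cs) = l + (cs.map (fun c => scount c.2)).sum := by
  rw [scount]
  rw [List.attach_map_val (l := cs) (f := fun c => scount c.2)]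

lemma ecount_node (l : ℕ) (cs : List (ℕ × PreRTM)) :
    ecount (.node l cs) = (cs.map (fun c => c.1 + ecount c.2)).sum := by
  rw [ecount]
  rw [List.attach_map_val (l := cs) (f := fun c => c.1 + ecount c.2)]

lemma vcount_pos (P : PreRTM) : 1 ≤ P.vcount := by
  obtain ⟨l, cs⟩ := P; rw [vcount_node]; omega

lemma le_foldr_max {L : List ℕ} {x : ℕ} (h : x ∈ L) : x ≤ L.foldr max 0 := by
  induction L with
  | nil => simp at h
  | cons a L ih =>
    rcases List.mem_cons.mp h with rfl | h
    · exact le_max_left _ _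
    · exact le_trans (ih h) (le_max_right _ _)

lemma foldr_max_replicate (k a : ℕ) (hk : k ≠ 0) :
    (List.replicate k a).foldr max 0 = a := by
  induction k with
  | zero => omega
  | succ k ih =>
    rw [List.replicate_succ, List.foldr_cons]
    cases Nat.eq_zero_or_pos k with
    | inl h => subst h; simp
    | inr h => rw [ih (by omega)]; simp

lemma vcount_eq_one {Q : PreRTM} (h : Q.vcount = 1) : ∃ g, Q = .node g [] := by
  obtain ⟨l, qs⟩ := Q
  rw [vcount_node] at h
  cases qs with
  | nil => exact ⟨l, rfl⟩
  | cons q qs =>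
    exfalso
    have := vcount_pos q.2
    simp only [List.map_cons, List.sum_cons] at h
    omega

-- case 1 canonical-shape computations
lemma maxV1 (a b c : ℕ) : (PreRTM.node a [(b, .node c [])]).maxV = 1 := by
  unfold maxV
  simp [children, vcount_node]

lemma maxS1 (a b c : ℕ) : (PreRTM.node a [(b, .node c [])]).maxS = c := by
  unfold maxS
  rw [maxV1]
  simp [children, vcount_node, scount_node]

lemma maxM1 (a b c : ℕ) : (PreRTM.node a [(b, .node c [])]).maxM = 0 := by
  unfold maxM
  rw [maxV1]
  simp [children, vcount_node, ecount_node]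

lemma maxL1 (a b c : ℕ) : (PreRTM.node a [(b, .node c [])]).maxL = b := by
  unfold maxL
  rw [maxV1, maxM1]
  simp [children, vcount_node, ecount_node]

lemma case1_set (s m g : ℤ) (hs : 0 ≤ s) (hm : 0 ≤ m) (hg : 0 ≤ g) (hgs : g ≤ s) :
    {P : PreRTM | P.memEEEE 2 s m 1 g 0 m}
      = {PreRTM.node (s-g).toNat [(m.toNat, .node g.toNat [])]} := by
  ext P
  simp only [Set.mem_setOf_eq, Set.mem_singleton_iff]
  constructor
  · rintro ⟨⟨⟨⟨⟨⟨hv, hsc, he⟩, _⟩, hmaxv⟩, hmaxs⟩, hmaxm⟩, hmaxl⟩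
    obtain ⟨l, cs⟩ := P
    rw [vcount_node] at hv
    have hv' : 1 + (cs.map (fun c => vcount c.2)).sum = 2 := by exact_mod_cast hv
    rcases cs with _ | ⟨⟨e, Q⟩, _ | ⟨c2, cs⟩⟩
    · simp at hv'
    case _ =>
      simp only [List.map_cons, List.map_nil, List.sum_cons, List.sum_nil] at hv'
      have hQv : Q.vcount = 1 := by omega
      obtain ⟨g', rfl⟩ := vcount_eq_one hQv
      rw [scount_node] at hsc
      rw [ecount_node] at he
      simp only [List.map_cons, List.map_nil, List.sum_cons, List.sum_nil,
        scount_node, ecount_node] at hsc he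
      rw [maxS1] at hmaxs
      rw [maxL1] at hmaxl
      have hl : (l : ℤ) = s - g := by push_cast at hsc; omega
      congr 1
      · omega
      · congr 2
        · omega
        · congr 1
          omega
    case _ =>
      exfalso
      have h1 := vcount_pos Q
      have h2 := vcount_pos c2.2
      simp only [List.map_cons, List.sum_cons] at hv'
      omega
  · rintro rfl
    have h1 : ((PreRTM.node (s-g).toNat [(m.toNat, .node g.toNat [])]).vcount : ℤ) = 2 := by
      rw [vcount_node]
      simp [vcount_node]
    have h2 : ((PreRTM.node (s-g).toNat [(m.toNat, .node g.toNat [])]).scount : ℤ) = s := by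
      rw [scount_node]
      simp [scount_node]
      omega
    have h3 : ((PreRTM.node (s-g).toNat [(m.toNat, .node g.toNat [])]).ecount : ℤ) = m := by
      rw [ecount_node]
      simp [ecount_node]
      omega
    refine ⟨⟨⟨⟨⟨⟨h1, h2, h3⟩, ?_, ?_, ?_, ?_⟩, ?_⟩, ?_⟩, ?_⟩, ?_⟩
    · rw [maxV1]; norm_num
    · rw [maxS1]; omega
    · rw [maxM1]; norm_num
    · rw [maxL1]; omega
    · rw [maxV1]; norm_num
    · rw [maxS1]; omega
    · rw [maxM1]; norm_num
    · rw [maxL1]; omega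

-- case 2 canonical-shape computations
lemma maxV2 (a k : ℕ) (hk : k ≠ 0) :
    (PreRTM.node a (List.replicate k (0, .node 0 []))).maxV = 1 := by
  unfold maxV
  simp only [children, List.map_replicate, vcount_node, List.map_nil, List.sum_nil]
  exact foldr_max_replicate k 1 hk

lemma filter2 (a k : ℕ) (hk : k ≠ 0) :
    ((PreRTM.node a (List.replicate k (0, .node 0 []))).children.filter
      (fun c => c.2.vcount == (PreRTM.node a (List.replicate k (0, .node 0 []))).maxV))
      = List.replicate k ((0 : ℕ), PreRTM.node 0 []) := by
  rw [maxV2 a k hk]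
  simp [children, List.filter_replicate, vcount_node]

lemma maxS2 (a k : ℕ) (hk : k ≠ 0) :
    (PreRTM.node a (List.replicate k (0, .node 0 []))).maxS = 0 := by
  unfold maxS
  rw [filter2 a k hk]
  simp only [List.map_replicate, scount_node, List.map_nil, List.sum_nil, Nat.add_zero]
  exact foldr_max_replicate k 0 hk

lemma maxM2 (a k : ℕ) (hk : k ≠ 0) :
    (PreRTM.node a (List.replicate k (0, .node 0 []))).maxM = 0 := by
  unfold maxM
  rw [filter2 a k hk]
  simp only [List.map_replicate, ecount_node, List.map_nil, List.sum_nil, Nat.add_zero]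
  exact foldr_max_replicate k 0 hk

lemma maxL2 (a k : ℕ) (hk : k ≠ 0) :
    (PreRTM.node a (List.replicate k (0, .node 0 []))).maxL = 0 := by
  unfold maxL
  rw [maxV2 a k hk, maxM2 a k hk]
  have : ((PreRTM.node a (List.replicate k (0, .node 0 []))).children.filter
      (fun c => (c.2.vcount == 1) && (c.2.ecount == 0)))
      = List.replicate k ((0 : ℕ), PreRTM.node 0 []) := by
    simp [children, List.filter_replicate, vcount_node, ecount_node]
  rw [this]
  simp only [List.map_replicate]
  exact foldr_max_replicate k 0 hk

lemma case2_set (n s : ℤ) (hn : 3 ≤ n) (hs : 0 ≤ s) :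
    {P : PreRTM | P.memEEEE n s 0 1 0 0 0}
      = {PreRTM.node s.toNat (List.replicate (n-1).toNat (0, .node 0 []))} := by
  have hk : (n-1).toNat ≠ 0 := by omega
  ext P
  simp only [Set.mem_setOf_eq, Set.mem_singleton_iff]
  constructor
  · rintro ⟨⟨⟨⟨⟨⟨hv, hsc, he⟩, _⟩, hmaxv⟩, hmaxs⟩, hmaxm⟩, hmaxl⟩
    obtain ⟨l, cs⟩ := P
    have hmaxv' : PreRTM.maxV (.node l cs) = 1 := by exact_mod_cast hmaxv
    have hmaxs' : PreRTM.maxS (.node l cs) = 0 := by exact_mod_cast hmaxs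
    have he' : PreRTM.ecount (.node l cs) = 0 := by exact_mod_cast he
    -- every child has vcount 1
    have hcv : ∀ c ∈ cs, vcount c.2 = 1 := by
      intro c hc
      have h1 : vcount c.2 ≤ PreRTM.maxV (.node l cs) := by
        unfold maxV
        simp only [children]
        exact le_foldr_max (List.mem_map.mpr ⟨c, hc, rfl⟩)
      have h2 := vcount_pos c.2
      omega
    -- the filter keeps everything
    have hfil : (cs.filter (fun c => c.2.vcount == PreRTM.maxV (.node l cs))) = cs := by
      apply List.filter_eq_self.mpr
      intro c hc
      rw [hmaxv', hcv c hc]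
      simp
    -- each child edge multiplicity is 0
    have hce : ∀ c ∈ cs, c.1 = 0 := by
      intro c hc
      rw [ecount_node] at he'
      have := (List.sum_eq_zero_iff.mp he') (c.1 + ecount c.2)
        (List.mem_map.mpr ⟨c, hc, rfl⟩)
      omega
    -- each child scount is 0
    have hcs : ∀ c ∈ cs, scount c.2 = 0 := by
      intro c hc
      have h1 : scount c.2 ≤ PreRTM.maxS (.node l cs) := by
        unfold maxS
        simp only [children]
        rw [hfil]
        exact le_foldr_max (List.mem_map.mpr ⟨c, hc, rfl⟩)
      omega
    -- each child is (0, node 0 [])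
    have hall : ∀ c ∈ cs, c = ((0 : ℕ), PreRTM.node 0 []) := by
      intro c hc
      obtain ⟨g', hg'⟩ := vcount_eq_one (hcv c hc)
      have h1 := hce c hc
      have h2 := hcs c hc
      rw [hg', scount_node] at h2
      simp only [List.map_nil, List.sum_nil] at h2
      have hg0 : g' = 0 := by omega
      subst hg0
      obtain ⟨c1, c2⟩ := c
      simp only [Prod.mk.injEq]
      exact ⟨h1, hg'⟩
    have hrep : cs = List.replicate cs.length ((0 : ℕ), PreRTM.node 0 []) :=
      List.eq_replicate_iff.mpr ⟨rfl, hall⟩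
    have hlen : (cs.length : ℤ) = n - 1 := by
      rw [vcount_node, hrep] at hv
      simp only [List.map_replicate, vcount_node, List.map_nil, List.sum_nil,
        List.sum_replicate, smul_eq_mul, List.length_replicate] at hv
      omega
    have hl : (l : ℤ) = s := by
      rw [scount_node, hrep] at hsc
      simp only [List.map_replicate, scount_node, List.map_nil, List.sum_nil,
        List.sum_replicate, smul_eq_mul, Nat.mul_zero, Nat.add_zero] at hsc
      exact_mod_cast hsc
    rw [hrep]
    congr 1
    · omega
    · congr 1
      omega
  · rintro rfl
    have h1 : ((PreRTM.node s.toNat (List.replicate (n-1).toNat (0, .node 0 []))).vcount : ℤ)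
        = n := by
      rw [vcount_node]
      simp only [List.map_replicate, vcount_node, List.map_nil, List.sum_nil,
        List.sum_replicate, smul_eq_mul, List.length_replicate, Nat.mul_one]
      push_cast
      omega
    have h2 : ((PreRTM.node s.toNat (List.replicate (n-1).toNat (0, .node 0 []))).scount : ℤ)
        = s := by
      rw [scount_node]
      simp only [List.map_replicate, scount_node, List.map_nil, List.sum_nil,
        List.sum_replicate, smul_eq_mul, Nat.mul_zero, Nat.add_zero]
      omega
    have h3 : ((PreRTM.node s.toNat (List.replicate (n-1).toNat (0, .node 0 []))).ecount : ℤ)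
        = 0 := by
      rw [ecount_node]
      simp only [List.map_replicate, ecount_node, List.map_nil, List.sum_nil,
        Nat.add_zero, List.sum_replicate, smul_eq_mul, Nat.mul_zero]
      norm_num
    refine ⟨⟨⟨⟨⟨⟨h1, h2, h3⟩, ?_, ?_, ?_, ?_⟩, ?_⟩, ?_⟩, ?_⟩, ?_⟩ <;>
      first
        | (rw [maxV2 _ _ hk]; norm_num)
        | (rw [maxS2 _ _ hk]; norm_num)
        | (rw [maxM2 _ _ hk]; norm_num)
        | (rw [maxL2 _ _ hk]; norm_num)

end PreRTM

/-- Corrected form of the paper's Lemma 4(iv). -/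
theorem lemma4_iv :
    (∀ s m g : ℤ, 0 ≤ s → 0 ≤ m → 0 ≤ g → g ≤ s → pEEEE 2 s m 1 g 0 m = 1) ∧
    (∀ n s : ℤ, 3 ≤ n → 0 ≤ s → pEEEE n s 0 1 0 0 0 = 1) := by
  constructor
  · intro s m g hs hm hg hgs
    rw [pEEEE, famEEEE, PreRTM.case1_set s m g hs hm hg hgs, Set.image_singleton,
      Set.ncard_singleton]
  · intro n s hn hs
    rw [pEEEE, famEEEE, PreRTM.case2_set n s hn hs, Set.image_singleton,
      Set.ncard_singleton]
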